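/- Fix constants κ>0 and β∈(0,1). Let α* be the unique solution in (0,β) of h_κ(α)=0, and let s* be the unique solution in (0,∞) of q_κ(s,1)=0. Then α* < s*, and consequently β/(s*)^κ < β/(α*)^κ; that is, the limiting risk of the minimum-norm interpolator using all components (which equals N^{1−κ}·β/(s*)^κ) is strictly smaller than the minimum limiting risk over the underparameterized regime (which equals N^{1−κ}·β/(α*)^κ). -/

import Mathlib

open Set Filter MeasureTheory

lemma aux_cont (κ : ℝ) : ContinuousOn (fun t : ℝ => t ^ (κ - 2) / (1 + t ^ κ)) (Set.Ioi 0) := by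
  refine ContinuousOn.div ?_ ?_ ?_
  · exact continuousOn_id.rpow_const fun x hx => Or.inl (ne_of_gt hx)
  · exact continuousOn_const.add (continuousOn_id.rpow_const fun x hx => Or.inl (ne_of_gt hx))
  · intro x hx
    have : (0:ℝ) < x ^ κ := Real.rpow_pos_of_pos hx κ
    exact ne_of_gt (by linarith)

lemma aux_ident {κ t : ℝ} (ht : 0 < t) : t ^ (κ - 2) = t ^ κ * t ^ (-2:ℝ) := by
  rw [← Real.rpow_add ht]; ring_nf

lemma aux_nonneg {κ t : ℝ} (ht : 0 < t) : 0 ≤ t ^ (κ - 2) / (1 + t ^ κ) := by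
  have := Real.rpow_pos_of_pos ht κ
  have := Real.rpow_nonneg ht.le (κ - 2)
  positivity

lemma aux_le {κ t : ℝ} (ht : 0 < t) : t ^ (κ - 2) / (1 + t ^ κ) ≤ t ^ (-2:ℝ) := by
  have h1 := aux_ident (κ := κ) ht
  have h2 : (0:ℝ) < t ^ κ := Real.rpow_pos_of_pos ht κ
  have h3 : (0:ℝ) < t ^ (-2:ℝ) := Real.rpow_pos_of_pos ht _
  rw [h1, div_le_iff₀ (by linarith)]
  nlinarith

lemma aux_lt {κ t : ℝ} (ht : 0 < t) : t ^ (κ - 2) / (1 + t ^ κ) < t ^ (-2:ℝ) := by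
  have h1 := aux_ident (κ := κ) ht
  have h2 : (0:ℝ) < t ^ κ := Real.rpow_pos_of_pos ht κ
  have h3 : (0:ℝ) < t ^ (-2:ℝ) := Real.rpow_pos_of_pos ht _
  rw [h1, div_lt_iff₀ (by linarith)]
  nlinarith

lemma aux_intOn {κ a : ℝ} (ha : 0 < a) :
    IntegrableOn (fun t : ℝ => t ^ (κ - 2) / (1 + t ^ κ)) (Set.Ioi a) := by
  refine ((integrableOn_Ioi_rpow_of_lt (by norm_num : (-2:ℝ) < -1) ha)).mono' ?_ ?_
  · exact ((aux_cont κ).mono (Ioi_subset_Ioi ha.le)).aestronglyMeasurable measurableSet_Ioi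
  · filter_upwards [ae_restrict_mem measurableSet_Ioi] with t ht
    have ht0 : (0:ℝ) < t := lt_trans ha ht
    rw [Real.norm_eq_abs, abs_of_nonneg (aux_nonneg ht0)]
    exact aux_le ht0

/-- For κ > 0 and β ∈ (0,1), with
`h α = β/α − ∫_α^1 t^{κ−2} dt − 1` and `q s = β/s − ∫_s^∞ t^{κ−2}/(1+t^κ) dt`,
if `α*` is the unique zero of `h` in `(0,β)` and `s*` the unique zero of `q`
in `(0,∞)`, then `α* < s*` and `β/(s*)^κ < β/(α*)^κ`; i.e. for every `N > 0`
the limiting risk `N^{1−κ}·β/(s*)^κ` of the minimum-norm interpolator using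
all components is strictly smaller than the minimum limiting risk
`N^{1−κ}·β/(α*)^κ` over the underparameterized regime. -/
theorem stmt8 (κ β : ℝ) (hκ : 0 < κ) (hβ : β ∈ Set.Ioo (0:ℝ) 1)
    (h q : ℝ → ℝ)
    (hh : ∀ α, h α = β / α - (∫ t in α..(1:ℝ), t ^ (κ - 2)) - 1)
    (hq : ∀ s, q s = β / s - ∫ t in Set.Ioi s, t ^ (κ - 2) / (1 + t ^ κ))
    (αs : ℝ) (hαs : αs ∈ Set.Ioo (0:ℝ) β) (hαz : h αs = 0)
    (hαu : ∀ α ∈ Set.Ioo (0:ℝ) β, h α = 0 → α = αs)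
    (ss : ℝ) (hss : ss ∈ Set.Ioi (0:ℝ)) (hsz : q ss = 0)
    (hsu : ∀ s ∈ Set.Ioi (0:ℝ), q s = 0 → s = ss) :
    αs < ss ∧ β / ss ^ κ < β / αs ^ κ ∧
    ∀ N : ℝ, 0 < N →
      N ^ (1 - κ) * β / ss ^ κ < N ^ (1 - κ) * β / αs ^ κ := by
  obtain ⟨hβ0, hβ1⟩ := hβ
  obtain ⟨hα0, hαβ⟩ := hαs
  have hα1 : αs < 1 := lt_trans hαβ hβ1
  set f : ℝ → ℝ := fun t => t ^ (κ - 2) / (1 + t ^ κ) with hf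
  -- Step 1: q αs > 0
  have hI1 : IntegrableOn f (Ioc αs 1) := (aux_intOn hα0).mono_set Ioc_subset_Ioi_self
  have hI2 : IntegrableOn f (Ioi 1) := aux_intOn one_pos
  have hsplit : ∫ t in Ioi αs, f t = (∫ t in Ioc αs 1, f t) + ∫ t in Ioi 1, f t := by
    rw [← setIntegral_union (Set.Ioc_disjoint_Ioi le_rfl) measurableSet_Ioi hI1 hI2,
      Set.Ioc_union_Ioi_eq_Ioi hα1.le]
  have hgint : IntegrableOn (fun t : ℝ => t ^ (κ - 2)) (Ioc αs 1) := by
    have : ContinuousOn (fun t : ℝ => t ^ (κ - 2)) (Icc αs 1) := by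
      refine continuousOn_id.rpow_const fun x hx => Or.inl (ne_of_gt (lt_of_lt_of_le hα0 hx.1))
    exact (this.integrableOn_Icc).mono_set Ioc_subset_Icc_self
  have hbound1 : (∫ t in Ioc αs 1, f t) ≤ ∫ t in Ioc αs 1, t ^ (κ - 2) := by
    refine setIntegral_mono_on hI1 hgint measurableSet_Ioc fun t ht => ?_
    have ht0 : (0:ℝ) < t := lt_trans hα0 ht.1
    have : (0:ℝ) < t ^ κ := Real.rpow_pos_of_pos ht0 κ
    exact div_le_self (Real.rpow_nonneg ht0.le _) (by linarith)
  have hIoc_eq : (∫ t in Ioc αs 1, t ^ (κ - 2)) = ∫ t in αs..(1:ℝ), t ^ (κ - 2) := by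
    rw [intervalIntegral.integral_of_le hα1.le]
  have hginv : IntegrableOn (fun t : ℝ => t ^ (-2:ℝ)) (Ioi 1) :=
    integrableOn_Ioi_rpow_of_lt (by norm_num) one_pos
  have hginv_val : (∫ t in Ioi (1:ℝ), t ^ (-2:ℝ)) = 1 := by
    rw [integral_Ioi_rpow_of_lt (by norm_num) one_pos]; norm_num
  have hbound2 : (∫ t in Ioi 1, f t) < 1 := by
    have hpos : 0 < ∫ t in Ioi (1:ℝ), (t ^ (-2:ℝ) - f t) := by
      rw [setIntegral_pos_iff_support_of_nonneg_ae]
      · have hsub : Ioi (1:ℝ) ⊆ (Function.support fun t => t ^ (-2:ℝ) - f t) ∩ Ioi 1 :=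
          fun t ht => ⟨ne_of_gt (sub_pos.mpr (aux_lt (lt_trans one_pos ht))), ht⟩
        refine lt_of_lt_of_le ?_ (measure_mono hsub)
        rw [Real.volume_Ioi]
        simp
      · filter_upwards [ae_restrict_mem measurableSet_Ioi] with t ht
        exact sub_nonneg.mpr (aux_le (lt_trans one_pos ht))
      · exact hginv.sub hI2
    have := integral_sub hginv hI2
    rw [this] at hpos
    linarith [hginv_val]
  have hqα : 0 < q αs := by
    have hhα := hh αs
    rw [hαz] at hhα
    rw [hq αs, hsplit]
    have := hIoc_eq
    linarith
  -- Step 2: find s0 > αs with q s0 < 0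
  set c : ℝ := (β / (1 - β)) ^ (κ⁻¹) with hcdef
  have h1β : (0:ℝ) < 1 - β := by linarith
  have hc0 : 0 ≤ c := Real.rpow_nonneg (by positivity) _
  set s0 : ℝ := max (αs + 1) (c + 1) with hs0def
  have hs0α : αs < s0 := lt_of_lt_of_le (by linarith) (le_max_left _ _)
  have hs0c : c < s0 := lt_of_lt_of_le (by linarith) (le_max_right _ _)
  have hs00 : 0 < s0 := lt_trans hα0 hs0α
  have hcκ : c ^ κ = β / (1 - β) := Real.rpow_inv_rpow (by positivity) (ne_of_gt hκ)
  have hs0κ : β / (1 - β) < s0 ^ κ := by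
    rw [← hcκ]; exact Real.rpow_lt_rpow hc0 hs0c hκ
  have hs0κpos : 0 < s0 ^ κ := Real.rpow_pos_of_pos hs00 κ
  have hβs0 : β * (1 + s0 ^ κ) < s0 ^ κ := by
    have := (div_lt_iff₀ h1β).mp hs0κ
    nlinarith
  set c0 : ℝ := s0 ^ κ / (1 + s0 ^ κ) with hc0def
  have hIs0 : IntegrableOn f (Ioi s0) := aux_intOn hs00
  have hgs0 : IntegrableOn (fun t : ℝ => c0 * t ^ (-2:ℝ)) (Ioi s0) :=
    (integrableOn_Ioi_rpow_of_lt (by norm_num) hs00).const_mul c0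
  have hlow : (∫ t in Ioi s0, c0 * t ^ (-2:ℝ)) ≤ ∫ t in Ioi s0, f t := by
    refine setIntegral_mono_on hgs0 hIs0 measurableSet_Ioi fun t ht => ?_
    have ht0 : (0:ℝ) < t := lt_trans hs00 ht
    have htκ : s0 ^ κ ≤ t ^ κ := Real.rpow_le_rpow hs00.le (le_of_lt ht) hκ.le
    have htκpos : (0:ℝ) < t ^ κ := Real.rpow_pos_of_pos ht0 κ
    have h2 : (0:ℝ) < t ^ (-2:ℝ) := Real.rpow_pos_of_pos ht0 _
    have hft : f t = t ^ κ / (1 + t ^ κ) * t ^ (-2:ℝ) := by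
      show t ^ (κ - 2) / (1 + t ^ κ) = _
      rw [aux_ident ht0]; ring
    rw [hft]
    refine mul_le_mul_of_nonneg_right ?_ h2.le
    rw [hc0def, div_le_div_iff₀ (by linarith) (by linarith)]
    nlinarith
  have hval : (∫ t in Ioi s0, c0 * t ^ (-2:ℝ)) = c0 * s0⁻¹ := by
    rw [integral_const_mul]
    congr 1
    rw [integral_Ioi_rpow_of_lt (by norm_num) hs00]
    norm_num [Real.rpow_neg_one]
  have hqs0 : q s0 < 0 := by
    rw [hq s0]
    have hβc0 : β / s0 < c0 * s0⁻¹ := by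
      rw [div_eq_mul_inv]
      refine mul_lt_mul_of_pos_right ?_ (inv_pos.mpr hs00)
      rw [hc0def, lt_div_iff₀ (by linarith)]
      linarith
    linarith [hlow, hval.symm.trans_le hlow]
  -- Step 3: continuity and IVT
  have hIcc : IntegrableOn f (Icc αs s0) :=
    ((integrableOn_Ici_iff_integrableOn_Ioi (hb := enorm_ne_top)).mpr (aux_intOn hα0)).mono_set Icc_subset_Ici_self
  have hqcont : ContinuousOn q (Icc αs s0) := by
    have hcongr : ∀ s ∈ Icc αs s0,
        (β / s - (∫ t in Ioi αs, f t)) + ∫ t in Ioc αs s, f t = q s := by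
      intro s hs
      have hs0' : (0:ℝ) < s := lt_of_lt_of_le hα0 hs.1
      have hsplit2 : ∫ t in Ioi αs, f t = (∫ t in Ioc αs s, f t) + ∫ t in Ioi s, f t := by
        rw [← setIntegral_union (Set.Ioc_disjoint_Ioi le_rfl) measurableSet_Ioi
          ((aux_intOn hα0).mono_set Ioc_subset_Ioi_self) (aux_intOn hs0'),
          Set.Ioc_union_Ioi_eq_Ioi hs.1]
      rw [hq s]; linarith
    refine ContinuousOn.congr ?_ (fun s hs => (hcongr s hs).symm)
    refine ContinuousOn.add (ContinuousOn.sub ?_ continuousOn_const) (intervalIntegral.continuousOn_primitive hIcc)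
    exact continuousOn_const.div continuousOn_id fun x hx => ne_of_gt (lt_of_lt_of_le hα0 hx.1)
  have hmem : (0:ℝ) ∈ Icc (q s0) (q αs) := ⟨hqs0.le, hqα.le⟩
  obtain ⟨x, hxmem, hxz⟩ := intermediate_value_Icc' hs0α.le hqcont hmem
  have hxss : x = ss := hsu x (lt_of_lt_of_le hα0 hxmem.1) hxz
  have hne : αs ≠ ss := fun he => by rw [he, hsz] at hqα; exact lt_irrefl 0 hqα
  have hmain : αs < ss := lt_of_le_of_ne (hxss ▸ hxmem.1) hne
  -- Step 4: conclusions
  have hκlt : αs ^ κ < ss ^ κ := Real.rpow_lt_rpow hα0.le hmain hκ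
  have hαpos : (0:ℝ) < αs ^ κ := Real.rpow_pos_of_pos hα0 κ
  have h2 : β / ss ^ κ < β / αs ^ κ := div_lt_div_of_pos_left hβ0 hαpos hκlt
  refine ⟨hmain, h2, fun N hN => ?_⟩
  rw [mul_div_assoc, mul_div_assoc]
  exact mul_lt_mul_of_pos_left h2 (Real.rpow_pos_of_pos hN _)
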